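/- (Lemma for power allocation) Let Λ', Λ₁ be N_r × N_r nonnegative diagonal matrices with Λ₁ ⪰ Λ' (entrywise on diagonals), let a ∈ (0,1], σ² > 0, p ≥ 1 an integer, and ρ₁, ρ₂ ≥ 0. Define Λ(ρ) = σ²(ρM + σ²I)^{-1}M where M = a^{2p}Λ' + (1−a^{2p})Λ₁. For ε ∈ [0, ρ₁], let g(ε) = tr( σ² D_ε ((ρ₂+ε) D_ε + σ² I)^{-1} ) where D_ε = a^{2q}[σ²((ρ₁−ε)M + σ²I)^{-1}M] + (1−a^{2q})Λ₁ for integer q ≥ 1. Then g(0) ≥ g(ε) for all ε ∈ [0, ρ₁]; i.e., shifting power from the earlier pilot use to the later pilot use does not increase the final estimation error. -/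

import Mathlib

set_option maxHeartbeats 2000000 in
/-- power allocation lemma: shifting pilot power `ε` from the
earlier pilot use to the later pilot use does not increase the final estimation
error. All matrices involved are nonnegative diagonal and are represented by
their diagonal entry functions; the trace is the corresponding sum. -/
theorem stmt9 {Nr : ℕ} (l' l1 : Fin Nr → ℝ)
    (hl' : ∀ j, 0 ≤ l' j) (hle : ∀ j, l' j ≤ l1 j)
    (a : ℝ) (ha : 0 < a) (ha1 : a ≤ 1) (σ2 : ℝ) (hσ : 0 < σ2)
    (p q : ℕ) (hp : 1 ≤ p) (hq : 1 ≤ q)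
    (ρ1 ρ2 : ℝ) (hρ1 : 0 ≤ ρ1) (hρ2 : 0 ≤ ρ2)
    (M : Fin Nr → ℝ) (hM : ∀ j, M j = a ^ (2 * p) * l' j + (1 - a ^ (2 * p)) * l1 j)
    (D : ℝ → Fin Nr → ℝ)
    (hD : ∀ ε j, D ε j =
      a ^ (2 * q) * (σ2 * M j / ((ρ1 - ε) * M j + σ2)) + (1 - a ^ (2 * q)) * l1 j)
    (g : ℝ → ℝ)
    (hg : ∀ ε, g ε = ∑ j, σ2 * D ε j / ((ρ2 + ε) * D ε j + σ2)) :
    ∀ ε, 0 ≤ ε → ε ≤ ρ1 → g ε ≤ g 0 := by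
  intro ε hε hερ
  rw [hg, hg]
  apply Finset.sum_le_sum
  intro j _
  have hA0 : 0 < a ^ (2 * q) := pow_pos ha _
  have hA1 : a ^ (2 * q) ≤ 1 := pow_le_one₀ ha.le ha1
  have hap0 : 0 < a ^ (2 * p) := pow_pos ha _
  have hap1 : a ^ (2 * p) ≤ 1 := pow_le_one₀ ha.le ha1
  have hl1 : 0 ≤ l1 j := le_trans (hl' j) (hle j)
  have hM0 : 0 ≤ M j := by rw [hM]; nlinarith [hl' j, hle j]
  have hMl1 : M j ≤ l1 j := by rw [hM]; nlinarith [hle j]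
  set m := M j with hm
  set A := a ^ (2 * q) with hA
  have hden0 : 0 < ρ1 * m + σ2 := by nlinarith
  have hden1 : 0 < (ρ1 - ε) * m + σ2 := by nlinarith
  have e0 : D 0 j * (ρ1 * m + σ2) = A * (σ2 * m) + (1 - A) * l1 j * (ρ1 * m + σ2) := by
    rw [hD, ← hm]
    have h : (ρ1 - 0) * m + σ2 = ρ1 * m + σ2 := by ring
    rw [h]
    field_simp
  have e1 : D ε j * ((ρ1 - ε) * m + σ2)
      = A * (σ2 * m) + (1 - A) * l1 j * ((ρ1 - ε) * m + σ2) := by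
    rw [hD, ← hm]
    field_simp
    have hne : m * (ρ1 - ε) + σ2 ≠ 0 := ne_of_gt (by nlinarith)
    rw [mul_add, mul_div_assoc', mul_comm (m * (ρ1 - ε) + σ2) (A * σ2 * m), mul_div_assoc,
      div_self hne]
    ring
  have hl1den0 : σ2 * m ≤ l1 j * (ρ1 * m + σ2) := by
    nlinarith [mul_nonneg (mul_nonneg hρ1 hM0) hl1, mul_nonneg hσ.le (sub_nonneg.2 hMl1)]
  have hl1den1 : σ2 * m ≤ l1 j * ((ρ1 - ε) * m + σ2) := by
    nlinarith [mul_nonneg (mul_nonneg (sub_nonneg.2 hερ) hM0) hl1,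
      mul_nonneg hσ.le (sub_nonneg.2 hMl1)]
  have hd0lb : σ2 * m ≤ D 0 j * (ρ1 * m + σ2) := by
    rw [e0]
    nlinarith [mul_nonneg (sub_nonneg.2 hA1) (sub_nonneg.2 hl1den0)]
  have hdelb : σ2 * m ≤ D ε j * ((ρ1 - ε) * m + σ2) := by
    rw [e1]
    nlinarith [mul_nonneg (sub_nonneg.2 hA1) (sub_nonneg.2 hl1den1)]
  have hsm : 0 ≤ σ2 * m := mul_nonneg hσ.le hM0
  have hd0nn : 0 ≤ D 0 j :=
    le_of_mul_le_mul_right (by rw [zero_mul]; exact le_trans hsm hd0lb) hden0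
  have hdenn : 0 ≤ D ε j :=
    le_of_mul_le_mul_right (by rw [zero_mul]; exact le_trans hsm hdelb) hden1
  have ediff : (D ε j - D 0 j) * (((ρ1 - ε) * m + σ2) * (ρ1 * m + σ2))
      = A * σ2 * m * (ε * m) := by
    linear_combination (ρ1 * m + σ2) * e1 - ((ρ1 - ε) * m + σ2) * e0
  -- key inequality: σ2 (D ε - D 0) ≤ ε * D 0 * D ε
  have hprod : (σ2 * m) * (σ2 * m) ≤ (D 0 j * (ρ1 * m + σ2)) * (D ε j * ((ρ1 - ε) * m + σ2)) :=
    mul_le_mul hd0lb hdelb hsm (le_trans hsm hd0lb)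
  have key : σ2 * (D ε j - D 0 j) ≤ ε * (D 0 j * D ε j) := by
    have hpos : 0 < ((ρ1 - ε) * m + σ2) * (ρ1 * m + σ2) := mul_pos hden1 hden0
    refine le_of_mul_le_mul_right ?_ hpos
    have h1 : σ2 * (D ε j - D 0 j) * (((ρ1 - ε) * m + σ2) * (ρ1 * m + σ2))
        = σ2 * (A * σ2 * m * (ε * m)) := by linear_combination σ2 * ediff
    rw [h1]
    have step1 : σ2 * (A * σ2 * m * (ε * m)) ≤ ε * ((σ2 * m) * (σ2 * m)) := by
      nlinarith [mul_nonneg (sub_nonneg.2 hA1) (mul_nonneg hε (mul_nonneg hsm hsm))]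
    calc σ2 * (A * σ2 * m * (ε * m)) ≤ ε * ((σ2 * m) * (σ2 * m)) := step1
      _ ≤ ε * ((D 0 j * (ρ1 * m + σ2)) * (D ε j * ((ρ1 - ε) * m + σ2))) :=
          mul_le_mul_of_nonneg_left hprod hε
      _ = ε * (D 0 j * D ε j) * (((ρ1 - ε) * m + σ2) * (ρ1 * m + σ2)) := by ring
  have hdene : 0 < (ρ2 + ε) * D ε j + σ2 := by nlinarith [mul_nonneg hρ2 hdenn]
  have hden0' : 0 < (ρ2 + 0) * D 0 j + σ2 := by nlinarith [mul_nonneg hρ2 hd0nn]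
  rw [div_le_div_iff₀ hdene hden0']
  nlinarith [mul_le_mul_of_nonneg_left key hσ.le]
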